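/- Let ℏ be a nonzero complex number and let V be a finite-dimensional indecomposable A-module containing a submodule W such that both W and the quotient V/W are isomorphic to V^ℏ(1). Then V is isomorphic to V^ℏ(2). (The module V^ℏ(2) realizes the only way to glue two copies of V^ℏ.) -/

import Mathlib

/-- A subspace invariant under the two operators `X`, `Y` (i.e. a submodule for
the module structure they define). -/
def AInvariant {V : Type} [AddCommGroup V] [Module ℂ V] (X Y : Module.End ℂ V)
    (p : Submodule ℂ V) : Prop :=
  ∀ v ∈ p, X v ∈ p ∧ Y v ∈ p

/-- A module (given by a vector space with two operators `X`, `Y`) is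
indecomposable if it is nonzero and is not the internal direct sum of two
nonzero invariant subspaces. -/
def AIndecomposable {V : Type} [AddCommGroup V] [Module ℂ V]
    (X Y : Module.End ℂ V) : Prop :=
  (∃ v : V, v ≠ 0) ∧ ∀ p q : Submodule ℂ V, AInvariant X Y p → AInvariant X Y q →
    IsCompl p q → p = ⊥ ∨ q = ⊥

/-- An isomorphism of modules given by pairs of endomorphisms: a linear
equivalence intertwining the respective actions. -/
def AModIso {V W : Type} [AddCommGroup V] [Module ℂ V] [AddCommGroup W] [Module ℂ W]
    (X Y : Module.End ℂ V) (X' Y' : Module.End ℂ W) : Prop :=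
  ∃ e : V ≃ₗ[ℂ] W, (∀ v, e (X v) = X' (e v)) ∧ (∀ v, e (Y v) = Y' (e v))

/-- The `n × n` Jordan block `J_n(ℏ)` with eigenvalue `ℏ`. -/
def jordan (n : ℕ) (ℏ : ℂ) : Matrix (Fin n) (Fin n) ℂ :=
  Matrix.of fun i j : Fin n =>
    if i = j then ℏ else if (j : ℕ) = (i : ℕ) + 1 then 1 else 0

/-- The action of `X` on the module `V^ℏ(n) = ℂⁿ ⊕ ℂⁿ`:
`X(u,v) = (J_n(ℏ)v, 0)`. -/
noncomputable def VhX (n : ℕ) (ℏ : ℂ) : Module.End ℂ ((Fin n → ℂ) × (Fin n → ℂ)) :=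
  LinearMap.prod
    ((Matrix.toLin' (jordan n ℏ)).comp (LinearMap.snd ℂ (Fin n → ℂ) (Fin n → ℂ)))
    (0 : ((Fin n → ℂ) × (Fin n → ℂ)) →ₗ[ℂ] (Fin n → ℂ))

/-- The action of `Y` on the module `V^ℏ(n) = ℂⁿ ⊕ ℂⁿ`: `Y(u,v) = (0, u)`. -/
noncomputable def VhY (n : ℕ) : Module.End ℂ ((Fin n → ℂ) × (Fin n → ℂ)) :=
  LinearMap.prod (0 : ((Fin n → ℂ) × (Fin n → ℂ)) →ₗ[ℂ] (Fin n → ℂ))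
    (LinearMap.fst ℂ (Fin n → ℂ) (Fin n → ℂ))

/- ### Auxiliary lemmas -/

lemma VhX_apply (n : ℕ) (ℏ : ℂ) (p : (Fin n → ℂ) × (Fin n → ℂ)) :
    VhX n ℏ p = ((jordan n ℏ).mulVec p.2, 0) := by
  simp [VhX, Matrix.toLin'_apply]

lemma VhY_apply (n : ℕ) (p : (Fin n → ℂ) × (Fin n → ℂ)) :
    VhY n p = (0, p.1) := rfl

lemma jordan_mulVec_one (ℏ : ℂ) (v : Fin 1 → ℂ) :
    (jordan 1 ℏ).mulVec v = fun _ => ℏ * v 0 := by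
  funext i
  simp [jordan, Matrix.mulVec, dotProduct, Fin.sum_univ_one, Subsingleton.elim i 0]

lemma jordan_mulVec_two_zero (ℏ : ℂ) (v : Fin 2 → ℂ) :
    (jordan 2 ℏ).mulVec v 0 = ℏ * v 0 + v 1 := by
  simp [jordan, Matrix.mulVec, dotProduct, Fin.sum_univ_two]

lemma jordan_mulVec_two_one (ℏ : ℂ) (v : Fin 2 → ℂ) :
    (jordan 2 ℏ).mulVec v 1 = ℏ * v 1 := by
  simp [jordan, Matrix.mulVec, dotProduct, Fin.sum_univ_two]

lemma Vh1_E (ℏ : ℂ) (p : (Fin 1 → ℂ) × (Fin 1 → ℂ)) :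
    VhX 1 ℏ (VhY 1 p) + VhY 1 (VhX 1 ℏ p) = ℏ • p := by
  rw [VhY_apply, VhX_apply, VhX_apply, VhY_apply]
  ext i <;> simp [jordan_mulVec_one, Subsingleton.elim i 0]

/-- The linear map `(u, v) ↦ u 0 • e₁ + u 1 • e₂ + v 0 • f₁ + v 1 • f₂`. -/
noncomputable def phiMap {V : Type} [AddCommGroup V] [Module ℂ V] (e₁ e₂ f₁ f₂ : V) :
    ((Fin 2 → ℂ) × (Fin 2 → ℂ)) →ₗ[ℂ] V where
  toFun p := p.1 0 • e₁ + p.1 1 • e₂ + p.2 0 • f₁ + p.2 1 • f₂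
  map_add' p q := by
    simp only [Prod.fst_add, Prod.snd_add, Pi.add_apply, add_smul]
    abel
  map_smul' c p := by
    simp only [Prod.smul_fst, Prod.smul_snd, Pi.smul_apply, smul_eq_mul, mul_smul,
      RingHom.id_apply, smul_add]

lemma phiMap_apply {V : Type} [AddCommGroup V] [Module ℂ V] (e₁ e₂ f₁ f₂ : V)
    (p : (Fin 2 → ℂ) × (Fin 2 → ℂ)) :
    phiMap e₁ e₂ f₁ f₂ p = p.1 0 • e₁ + p.1 1 • e₂ + p.2 0 • f₁ + p.2 1 • f₂ := rfl

/-- The module `V^ℏ(2)` realizes the only way to glue two copies of `V^ℏ`: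
if `ℏ ≠ 0` and a finite-dimensional indecomposable `A`-module `V` has a
submodule `W ≅ V^ℏ(1)` with quotient `V/W ≅ V^ℏ(1)`, then `V ≅ V^ℏ(2)`. -/
theorem glue_two_copies (ℏ : ℂ) (hℏ : ℏ ≠ 0)
    (V : Type) [AddCommGroup V] [Module ℂ V] [FiniteDimensional ℂ V]
    (X Y : Module.End ℂ V) (hX : X * X = 0) (hY : Y * Y = 0)
    (hind : AIndecomposable X Y)
    (W : Submodule ℂ V) (hWX : ∀ v ∈ W, X v ∈ W) (hWY : ∀ v ∈ W, Y v ∈ W)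
    (hWiso : AModIso (X.restrict hWX) (Y.restrict hWY) (VhX 1 ℏ) (VhY 1))
    (hQiso : AModIso (Submodule.mapQ W W X fun v hv => hWX v hv)
      (Submodule.mapQ W W Y fun v hv => hWY v hv) (VhX 1 ℏ) (VhY 1)) :
    AModIso X Y (VhX 2 ℏ) (VhY 2) := by
  obtain ⟨f, hfX, hfY⟩ := hWiso
  obtain ⟨g, hgX, hgY⟩ := hQiso
  have hXX : ∀ v : V, X (X v) = 0 := fun v => by
    have := LinearMap.ext_iff.mp hX v; simpa [Module.End.mul_apply] using this
  have hYY : ∀ v : V, Y (Y v) = 0 := fun v => by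
    have := LinearMap.ext_iff.mp hY v; simpa [Module.End.mul_apply] using this
  set N : Module.End ℂ V := X * Y + Y * X - ℏ • (1 : Module.End ℂ V) with hNdef
  have hNapp : ∀ v : V, N v = X (Y v) + Y (X v) - ℏ • v := by
    intro v
    simp [hNdef, Module.End.mul_apply, LinearMap.sub_apply, LinearMap.add_apply,
      LinearMap.smul_apply]
  -- `E = ℏ` on `W`
  have hEW : ∀ w : W, (X.restrict hWX) ((Y.restrict hWY) w)
      + (Y.restrict hWY) ((X.restrict hWX) w) = ℏ • w := by
    intro w
    apply f.injective
    simp only [map_add, map_smul, hfX, hfY]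
    exact Vh1_E ℏ (f w)
  have hNW : ∀ v ∈ W, N v = 0 := by
    intro v hv
    have h2 := congrArg Subtype.val (hEW ⟨v, hv⟩)
    simp only [Submodule.coe_add, Submodule.coe_smul, LinearMap.restrict_apply] at h2
    rw [hNapp, sub_eq_zero]
    exact h2
  -- `E = ℏ` on the quotient
  have hNQ : ∀ v : V, N v ∈ W := by
    intro v
    rw [← Submodule.Quotient.mk_eq_zero]
    have hmk : (Submodule.Quotient.mk (N v) : V ⧸ W)
        = (Submodule.mapQ W W X fun v hv => hWX v hv)
            ((Submodule.mapQ W W Y fun v hv => hWY v hv) (Submodule.Quotient.mk v))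
          + (Submodule.mapQ W W Y fun v hv => hWY v hv)
            ((Submodule.mapQ W W X fun v hv => hWX v hv) (Submodule.Quotient.mk v))
          - ℏ • Submodule.Quotient.mk v := by
      rw [hNapp]
      simp only [Submodule.mapQ_apply]
      rw [Submodule.Quotient.mk_sub, Submodule.Quotient.mk_add, Submodule.Quotient.mk_smul]
    rw [hmk]
    apply g.injective
    simp only [map_add, map_sub, map_smul, map_zero, hgX, hgY]
    rw [sub_eq_zero]
    exact Vh1_E ℏ (g (Submodule.Quotient.mk v))
  have hNN : ∀ v : V, N (N v) = 0 := fun v => hNW _ (hNQ v)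
  have hNX : ∀ v : V, N (X v) = X (N v) := by
    intro v
    rw [hNapp, hNapp (v := v), map_sub, map_add, map_smul, hXX, hXX, map_zero]
    abel
  have hNY : ∀ v : V, N (Y v) = Y (N v) := by
    intro v
    rw [hNapp, hNapp (v := v), map_sub, map_add, map_smul, hYY, hYY, map_zero]
    abel
  by_cases h0 : ∀ v : V, N v = 0
  · -- the extension splits: contradiction with indecomposability
    exfalso
    have hE0 : ∀ v : V, X (Y v) + Y (X v) = ℏ • v := by
      intro v
      have := h0 v
      rw [hNapp, sub_eq_zero] at this
      exact this
    set one1 : Fin 1 → ℂ := (fun _ => 1) with hone1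
    set abar := g.symm (one1, 0) with habar
    set bbar := g.symm (0, one1) with hbbar
    have hga : g abar = (one1, 0) := g.apply_symm_apply _
    have hgb : g bbar = (0, one1) := g.apply_symm_apply _
    have habar0 : abar ≠ 0 := by
      intro h
      rw [h, map_zero] at hga
      have := congrFun (congrArg Prod.fst hga) 0
      simp [hone1] at this
    have hXa : (Submodule.mapQ W W X fun v hv => hWX v hv) abar = 0 := by
      apply g.injective
      rw [hgX, hga, map_zero, VhX_apply]
      simp
    have hYa : (Submodule.mapQ W W Y fun v hv => hWY v hv) abar = bbar := by
      apply g.injective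
      rw [hgY, hga, hgb, VhY_apply]
    obtain ⟨q, hq⟩ := Submodule.Quotient.mk_surjective W abar
    have hXqW : X q ∈ W := by
      rw [← Submodule.Quotient.mk_eq_zero]
      have : (Submodule.Quotient.mk (X q) : V ⧸ W)
          = (Submodule.mapQ W W X fun v hv => hWX v hv) abar := by
        rw [← hq, Submodule.mapQ_apply]
      rw [this, hXa]
    set t : W := ⟨X q, hXqW⟩ with ht
    have hXt : (X.restrict hWX) t = 0 := by
      apply Subtype.ext
      simp [LinearMap.restrict_apply, ht, hXX]
    have hft2 : (f t).2 = 0 := by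
      have h1 := hfX t
      rw [hXt, map_zero, VhX_apply] at h1
      have h2 : (jordan 1 ℏ).mulVec (f t).2 = 0 := by
        have := congrArg Prod.fst h1
        simpa using this.symm
      have h3 := congrFun h2 0
      rw [jordan_mulVec_one] at h3
      have h4 : (f t).2 0 = 0 := (mul_eq_zero.mp h3).resolve_left hℏ
      funext i
      simpa [Subsingleton.elim i (0 : Fin 1)] using h4
    set w : W := f.symm (0, ℏ⁻¹ • (f t).1) with hw
    have hXw : (X.restrict hWX) w = t := by
      apply f.injective
      rw [hfX, f.apply_symm_apply, VhX_apply]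
      have : f t = ((f t).1, (f t).2) := rfl
      rw [this, hft2]
      refine Prod.ext ?_ rfl
      funext i
      rw [jordan_mulVec_one]
      simp only [Pi.smul_apply, smul_eq_mul, Subsingleton.elim i (0 : Fin 1)]
      field_simp
    have hXwv : X (w : V) = X q := by
      have := congrArg Subtype.val hXw
      simpa [LinearMap.restrict_apply, ht] using this
    set q' := q - (w : V) with hq'def
    have hXq' : X q' = 0 := by rw [hq'def, map_sub, hXwv, sub_self]
    have hmkq' : (Submodule.Quotient.mk q' : V ⧸ W) = abar := by
      rw [hq'def, Submodule.Quotient.mk_sub]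
      rw [(Submodule.Quotient.mk_eq_zero W).mpr w.2, sub_zero, hq]
    set U := Submodule.span ℂ {q', Y q'} with hU
    have hq'U : q' ∈ U := Submodule.subset_span (Set.mem_insert _ _)
    have hYq'U : Y q' ∈ U := Submodule.subset_span (Set.mem_insert_of_mem _ rfl)
    have hXYq' : X (Y q') = ℏ • q' := by
      have := hE0 q'
      rw [hXq', map_zero, add_zero] at this
      exact this
    have hUinv : AInvariant X Y U := by
      intro v hv
      obtain ⟨c, d, hcd⟩ := Submodule.mem_span_pair.mp hv
      constructor
      · rw [← hcd, map_add, map_smul, map_smul, hXq', hXYq', smul_zero, zero_add]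
        exact U.smul_mem d (U.smul_mem ℏ hq'U)
      · rw [← hcd, map_add, map_smul, map_smul, hYY, smul_zero, add_zero]
        exact U.smul_mem c hYq'U
    have hWinv : AInvariant X Y W := fun v hv => ⟨hWX v hv, hWY v hv⟩
    have hmkYq' : (Submodule.Quotient.mk (Y q') : V ⧸ W) = bbar := by
      rw [← hYa, ← hmkq', Submodule.mapQ_apply]
    have hindep : ∀ c d : ℂ, c • abar + d • bbar = 0 → c = 0 ∧ d = 0 := by
      intro c d h
      have h2 := congrArg g h
      rw [map_add, map_smul, map_smul, hga, hgb, map_zero] at h2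
      constructor
      · have := congrFun (congrArg Prod.fst h2) 0
        simpa [hone1] using this
      · have := congrFun (congrArg Prod.snd h2) 0
        simpa [hone1] using this
    have hdisj : Disjoint W U := by
      rw [Submodule.disjoint_def]
      intro x hxW hxU
      obtain ⟨c, d, hcd⟩ := Submodule.mem_span_pair.mp hxU
      have hmk : c • abar + d • bbar = 0 := by
        rw [← hmkq', ← hmkYq', ← Submodule.Quotient.mk_smul, ← Submodule.Quotient.mk_smul,
          ← Submodule.Quotient.mk_add, hcd]
        exact (Submodule.Quotient.mk_eq_zero W).mpr hxW
      obtain ⟨hc, hd⟩ := hindep c d hmk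
      rw [← hcd, hc, hd, zero_smul, zero_smul, add_zero]
    have hcodis : Codisjoint W U := by
      rw [codisjoint_iff, eq_top_iff]
      intro v _
      set c := (g (Submodule.Quotient.mk v)).1 0 with hc
      set d := (g (Submodule.Quotient.mk v)).2 0 with hd
      have hv : (Submodule.Quotient.mk v : V ⧸ W) = c • abar + d • bbar := by
        apply g.injective
        rw [map_add, map_smul, map_smul, hga, hgb]
        refine Prod.ext ?_ ?_ <;> funext i <;>
          simp [hone1, hc, hd, Subsingleton.elim i (0 : Fin 1)]
      have hdiff : v - (c • q' + d • Y q') ∈ W := by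
        rw [← Submodule.Quotient.mk_eq_zero, Submodule.Quotient.mk_sub,
          Submodule.Quotient.mk_add, Submodule.Quotient.mk_smul, Submodule.Quotient.mk_smul,
          hmkq', hmkYq', ← hv, sub_self]
      refine Submodule.mem_sup.mpr ⟨v - (c • q' + d • Y q'), hdiff,
        c • q' + d • Y q', U.add_mem (U.smul_mem c hq'U) (U.smul_mem d hYq'U), by abel⟩
    have hWne : W ≠ ⊥ := by
      intro hbot
      set w0 : W := f.symm (one1, 0) with hw0
      have h1 : (w0 : V) = 0 := (Submodule.eq_bot_iff W).mp hbot _ w0.2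
      have h2 : w0 = 0 := Subtype.ext h1
      have h3 : f w0 = (one1, 0) := f.apply_symm_apply _
      rw [h2, map_zero] at h3
      have := congrFun (congrArg Prod.fst h3) 0
      simp [hone1] at this
    have hUne : U ≠ ⊥ := by
      intro hbot
      have h1 : q' = 0 := (Submodule.eq_bot_iff U).mp hbot _ hq'U
      apply habar0
      rw [← hmkq', h1, Submodule.Quotient.mk_zero]
    rcases hind.2 W U hWinv hUinv ⟨hdisj, hcodis⟩ with h | h
    exacts [hWne h, hUne h]
  · -- main case: `N ≠ 0`
    push_neg at h0
    obtain ⟨v0, hv0⟩ := h0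
    set F : Module.End ℂ V := ℏ⁻¹ • (1 : Module.End ℂ V) - (ℏ⁻¹ * ℏ⁻¹) • N with hFdef
    have hFapp : ∀ v : V, F v = ℏ⁻¹ • v - (ℏ⁻¹ * ℏ⁻¹) • N v := by
      intro v
      simp [hFdef, LinearMap.sub_apply, LinearMap.smul_apply]
    have hFN : ∀ v : V, N (F v) = F (N v) := by
      intro v
      simp only [hFapp, map_sub, map_smul, hNN, smul_zero, sub_zero]
    have hid : ∀ v : V, X (F (Y v)) + Y (F (X v)) = v := by
      intro v
      have key : X (Y (N v)) + Y (X (N v)) = ℏ • N v := by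
        have h := hNN v
        rw [hNapp (N v), sub_eq_zero] at h
        exact h
      rw [hFapp, hFapp, map_sub, map_sub, map_smul, map_smul, map_smul, map_smul, hNY, hNX]
      have hre : ℏ⁻¹ • X (Y v) - (ℏ⁻¹ * ℏ⁻¹) • X (Y (N v))
          + (ℏ⁻¹ • Y (X v) - (ℏ⁻¹ * ℏ⁻¹) • Y (X (N v)))
          = ℏ⁻¹ • (X (Y v) + Y (X v)) - (ℏ⁻¹ * ℏ⁻¹) • (X (Y (N v)) + Y (X (N v))) := by
        module
      rw [hre, key, hNapp]
      match_scalars <;> field_simp <;> ring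
    have hexist : ∃ x : V, X x = 0 ∧ N x ≠ 0 := by
      by_contra hcon
      push_neg at hcon
      apply hv0
      have hkY : ∀ y : V, Y y = 0 → N y = 0 := by
        intro y hy
        have hy2 : y = Y (F (X y)) := by
          have h := hid y
          rw [hy, map_zero, map_zero, zero_add] at h
          exact h.symm
        rw [hy2, hNY, hFN, hcon _ (hXX y), map_zero, map_zero]
      have h1 : N (X (F (Y v0))) = 0 := hcon _ (hXX _)
      have h2 : N (Y (F (X v0))) = 0 := hkY _ (hYY _)
      rw [← hid v0, map_add, h1, h2, add_zero]
    obtain ⟨x, hx1, hx2⟩ := hexist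
    have hXe1 : X (N x) = 0 := by rw [← hNX, hx1, map_zero]
    have hXf1 : X (Y (N x)) = ℏ • N x := by
      have h := hNapp (N x)
      rw [hNN, hXe1, map_zero, add_zero] at h
      exact sub_eq_zero.mp h.symm
    have hXf2 : X (Y x) = N x + ℏ • x := by
      have h := hNapp x
      rw [hx1, map_zero, add_zero] at h
      exact sub_eq_iff_eq_add.mp h.symm
    have hpair : ∀ a b : ℂ, a • N x + b • x = 0 → a = 0 ∧ b = 0 := by
      intro a b h
      have hb : b = 0 := by
        have h2 := congrArg N h
        rw [map_add, map_smul, map_smul, hNN, smul_zero, zero_add, map_zero] at h2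
        exact (smul_eq_zero.mp h2).resolve_right hx2
      refine ⟨?_, hb⟩
      rw [hb, zero_smul, add_zero] at h
      exact (smul_eq_zero.mp h).resolve_right hx2
    set φ := phiMap (N x) x (Y (N x)) (Y x) with hφdef
    have hφX : ∀ p, φ (VhX 2 ℏ p) = X (φ p) := by
      intro p
      rw [VhX_apply, hφdef, phiMap_apply, phiMap_apply]
      simp only [Pi.zero_apply, zero_smul, add_zero]
      rw [jordan_mulVec_two_zero, jordan_mulVec_two_one]
      rw [map_add, map_add, map_add, map_smul, map_smul, map_smul, map_smul,
        hXe1, hx1, hXf1, hXf2]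
      module
    have hφY : ∀ p, φ (VhY 2 p) = Y (φ p) := by
      intro p
      rw [VhY_apply, hφdef, phiMap_apply, phiMap_apply]
      simp only [Pi.zero_apply, zero_smul, zero_add]
      rw [map_add, map_add, map_add, map_smul, map_smul, map_smul, map_smul,
        hYY, hYY]
      module
    have hinj : Function.Injective φ := by
      rw [injective_iff_map_eq_zero]
      intro p hp
      rw [hφdef, phiMap_apply] at hp
      have h1 := congrArg X hp
      rw [map_add, map_add, map_add, map_smul, map_smul, map_smul, map_smul,
        hXe1, hx1, hXf1, hXf2, map_zero] at h1
      have h1' : (p.2 0 * ℏ + p.2 1) • N x + (p.2 1 * ℏ) • x = 0 := by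
        rw [← h1]; module
      obtain ⟨hc, hd⟩ := hpair _ _ h1'
      have hp2 : p.2 1 = 0 := by
        rcases mul_eq_zero.mp hd with h | h
        · exact h
        · exact absurd h hℏ
      have hp1 : p.2 0 = 0 := by
        rw [hp2, add_zero] at hc
        rcases mul_eq_zero.mp hc with h | h
        · exact h
        · exact absurd h hℏ
      rw [hp1, hp2, zero_smul, zero_smul, add_zero, add_zero] at hp
      obtain ⟨ha, hb⟩ := hpair _ _ hp
      have : p = ((fun i => p.1 i), (fun i => p.2 i)) := rfl
      refine Prod.ext ?_ ?_ <;> funext i <;> fin_cases i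
      · exact ha
      · exact hb
      · exact hp1
      · exact hp2
    have hdimW : Module.finrank ℂ W = 2 := by
      rw [f.finrank_eq]; simp
    have hdimQ : Module.finrank ℂ (V ⧸ W) = 2 := by
      rw [g.finrank_eq]; simp
    have hdimV : Module.finrank ℂ V = 4 := by
      have := Submodule.finrank_quotient_add_finrank W
      omega
    have hdom : Module.finrank ℂ ((Fin 2 → ℂ) × (Fin 2 → ℂ)) = 4 := by simp
    have hsurj : Function.Surjective φ :=
      (LinearMap.injective_iff_surjective_of_finrank_eq_finrank
        (by rw [hdom, hdimV])).mp hinj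
    set ψ := LinearEquiv.ofBijective φ ⟨hinj, hsurj⟩ with hψdef
    have hψ : ∀ z, ψ z = φ z := fun z => rfl
    refine ⟨ψ.symm, fun v => ?_, fun v => ?_⟩
    · apply ψ.injective
      rw [ψ.apply_symm_apply, hψ, hφX, ← hψ, ψ.apply_symm_apply]
    · apply ψ.injective
      rw [ψ.apply_symm_apply, hψ, hφY, ← hψ, ψ.apply_symm_apply]
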